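/- Define f : (0,1] → ℝ by f(μ) = 2(2 − √μ)(ln 2 − ln(2 − √μ))/√μ − 1. Then f is nonincreasing on (0,1], f(μ) ∈ [2 ln 2 − 1, 1] for all μ ∈ (0,1], and f(μ) → 1 as μ → 0^+. -/

import Mathlib

open Real Filter

private noncomputable def gsG : ℝ → ℝ := fun x => (1 - x) * (-Real.log (1 - x)) / x

private lemma gsG_deriv {x : ℝ} (hx : x ∈ Set.Ioo (0:ℝ) 1) :
    HasDerivAt gsG ((Real.log (1 - x) + x) / x ^ 2) x := by
  have hx0 : x ≠ 0 := hx.1.ne'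
  have h1x : (0:ℝ) < 1 - x := by linarith [hx.2]
  have h0 : HasDerivAt (fun y : ℝ => 1 - y) (-1) x := (hasDerivAt_id x).const_sub 1
  have hlog : HasDerivAt (fun y : ℝ => Real.log (1 - y)) ((1 - x)⁻¹ * (-1)) x :=
    (Real.hasDerivAt_log h1x.ne').comp x h0
  have hN : HasDerivAt (fun y : ℝ => (1 - y) * (-Real.log (1 - y)))
      ((-1) * (-Real.log (1 - x)) + (1 - x) * (-((1 - x)⁻¹ * (-1)))) x :=
    h0.mul hlog.neg
  have hG : HasDerivAt gsG
      ((((-1) * (-Real.log (1 - x)) + (1 - x) * (-((1 - x)⁻¹ * (-1)))) * x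
        - (1 - x) * (-Real.log (1 - x)) * 1) / x ^ 2) x :=
    hN.div (hasDerivAt_id x) hx0
  convert hG using 1
  field_simp
  ring

private lemma gsG_anti : AntitoneOn gsG (Set.Ioo (0:ℝ) 1) := by
  apply antitoneOn_of_deriv_nonpos (convex_Ioo 0 1)
  · exact fun x hx => (gsG_deriv hx).differentiableAt.continuousAt.continuousWithinAt
  · intro x hx
    rw [interior_Ioo] at hx
    exact (gsG_deriv hx).differentiableAt.differentiableWithinAt
  · intro x hx
    rw [interior_Ioo] at hx
    rw [(gsG_deriv hx).deriv]
    apply div_nonpos_of_nonpos_of_nonneg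
    · have h1x : (0:ℝ) < 1 - x := by linarith [hx.2]
      have := Real.log_le_sub_one_of_pos h1x
      linarith
    · positivity

private lemma gsG_le_one {x : ℝ} (hx : x ∈ Set.Ioo (0:ℝ) 1) : gsG x ≤ 1 := by
  have h1x : (0:ℝ) < 1 - x := by linarith [hx.2]
  rw [gsG, div_le_one hx.1]
  have h := Real.log_le_sub_one_of_pos (inv_pos.mpr h1x)
  rw [Real.log_inv] at h
  nlinarith [mul_le_mul_of_nonneg_left h h1x.le, mul_inv_cancel₀ h1x.ne']

private lemma gsG_half : gsG (1/2) = Real.log 2 := by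
  have : Real.log (1 - 1/2 : ℝ) = -Real.log 2 := by
    rw [show (1 - 1/2 : ℝ) = 2⁻¹ by norm_num, Real.log_inv]
  rw [gsG]
  rw [this]
  ring

/-- The closed-form gain-splitting function
`f(μ) = 2(2 - √μ)(ln 2 - ln(2 - √μ))/√μ - 1` is nonincreasing on `(0,1]`,
takes values in `[2 ln 2 - 1, 1]` there, and tends to `1` as `μ → 0⁺`. -/
theorem gain_splitting_closed_form_properties
    (f : ℝ → ℝ)
    (hf : ∀ μ ∈ Set.Ioc (0 : ℝ) 1,
      f μ = 2 * (2 - Real.sqrt μ) * (Real.log 2 - Real.log (2 - Real.sqrt μ))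
              / Real.sqrt μ - 1) :
    AntitoneOn f (Set.Ioc (0 : ℝ) 1) ∧
      (∀ μ ∈ Set.Ioc (0 : ℝ) 1, f μ ∈ Set.Icc (2 * Real.log 2 - 1) 1) ∧
      Tendsto f (nhdsWithin 0 (Set.Ioi 0)) (nhds 1) := by
  -- basic facts about √μ for μ ∈ (0,1]
  have hs : ∀ μ ∈ Set.Ioc (0 : ℝ) 1, 0 < Real.sqrt μ ∧ Real.sqrt μ ≤ 1 := by
    intro μ hμ
    exact ⟨Real.sqrt_pos.mpr hμ.1, by
      rw [show (1:ℝ) = Real.sqrt 1 by simp]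
      exact Real.sqrt_le_sqrt hμ.2⟩
  -- rewriting f in terms of gsG
  have key : ∀ μ ∈ Set.Ioc (0 : ℝ) 1, f μ = 2 * gsG (Real.sqrt μ / 2) - 1 := by
    intro μ hμ
    obtain ⟨hs0, hs1⟩ := hs μ hμ
    have h2s : (0:ℝ) < 2 - Real.sqrt μ := by linarith
    rw [hf μ hμ, gsG]
    have hlog : Real.log (1 - Real.sqrt μ / 2) = Real.log (2 - Real.sqrt μ) - Real.log 2 := by
      rw [show 1 - Real.sqrt μ / 2 = (2 - Real.sqrt μ) / 2 by ring,
        Real.log_div h2s.ne' two_ne_zero]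
    rw [hlog]
    field_simp
    ring
  have hmem : ∀ μ ∈ Set.Ioc (0 : ℝ) 1, Real.sqrt μ / 2 ∈ Set.Ioo (0:ℝ) 1 := by
    intro μ hμ
    obtain ⟨hs0, hs1⟩ := hs μ hμ
    constructor <;> [positivity; linarith]
  refine ⟨?_, ?_, ?_⟩
  · -- antitone
    intro a ha b hb hab
    rw [key a ha, key b hb]
    have h1 : Real.sqrt a / 2 ≤ Real.sqrt b / 2 := by
      have := Real.sqrt_le_sqrt hab
      linarith
    have := gsG_anti (hmem a ha) (hmem b hb) h1
    linarith
  · -- bounds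
    intro μ hμ
    rw [key μ hμ]
    obtain ⟨hs0, hs1⟩ := hs μ hμ
    constructor
    · -- lower bound via value at 1/2
      have hhalf : (1/2 : ℝ) ∈ Set.Ioo (0:ℝ) 1 := by norm_num
      have hle : Real.sqrt μ / 2 ≤ 1/2 := by linarith
      have := gsG_anti (hmem μ hμ) hhalf hle
      rw [gsG_half] at this
      linarith
    · have := gsG_le_one (hmem μ hμ)
      linarith
  · -- limit
    have hG : Tendsto gsG (nhdsWithin 0 (Set.Ioi 0)) (nhds 1) := by
      have hd : HasDerivAt (fun y : ℝ => Real.log (1 - y)) (-1) 0 := by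
        have h0 : HasDerivAt (fun y : ℝ => 1 - y) (-1) (0:ℝ) := (hasDerivAt_id 0).const_sub 1
        have := (Real.hasDerivAt_log (by norm_num : (1:ℝ) - 0 ≠ 0)).comp 0 h0
        exact this.congr_deriv (by norm_num)
      have hslope : Tendsto (fun x : ℝ => Real.log (1 - x) / x)
          (nhdsWithin 0 {(0:ℝ)}ᶜ) (nhds (-1)) := by
        have := hasDerivAt_iff_tendsto_slope.mp hd
        refine this.congr' ?_
        filter_upwards [self_mem_nhdsWithin] with x hx
        simp [slope_def_field, div_eq_div_iff]
      have hslope' : Tendsto (fun x : ℝ => Real.log (1 - x) / x)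
          (nhdsWithin 0 (Set.Ioi 0)) (nhds (-1)) :=
        hslope.mono_left (nhdsWithin_mono _ (fun x hx => ne_of_gt hx))
      have h1x : Tendsto (fun x : ℝ => 1 - x) (nhdsWithin 0 (Set.Ioi 0)) (nhds 1) := by
        have : Tendsto (fun x : ℝ => 1 - x) (nhds 0) (nhds 1) := by
          have h := ((continuous_const (y := (1:ℝ))).sub continuous_id).tendsto (0:ℝ)
          have h2 : (((fun _ : ℝ => (1:ℝ)) - id : ℝ → ℝ) 0) = 1 := by simp
          rw [h2] at h
          exact h
        exact this.mono_left nhdsWithin_le_nhds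
      have := h1x.mul hslope'.neg
      rw [show (1:ℝ) * -(-1) = 1 by ring] at this
      refine this.congr ?_
      intro x
      rw [gsG]
      ring
    have hsq : Tendsto (fun μ : ℝ => Real.sqrt μ / 2)
        (nhdsWithin 0 (Set.Ioi 0)) (nhdsWithin 0 (Set.Ioi 0)) := by
      rw [tendsto_nhdsWithin_iff]
      constructor
      · have : Tendsto (fun μ : ℝ => Real.sqrt μ / 2) (nhds 0) (nhds 0) := by
          have := (Real.continuous_sqrt.tendsto' 0 0 Real.sqrt_zero).div_const 2
          simpa using this
        exact this.mono_left nhdsWithin_le_nhds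
      · filter_upwards [self_mem_nhdsWithin] with μ hμ
        have : 0 < Real.sqrt μ := Real.sqrt_pos.mpr hμ
        exact Set.mem_Ioi.mpr (by positivity)
    have hmain : Tendsto (fun μ : ℝ => 2 * gsG (Real.sqrt μ / 2) - 1)
        (nhdsWithin 0 (Set.Ioi 0)) (nhds 1) := by
      have := ((hG.comp hsq).const_mul 2).sub_const 1
      norm_num at this
      exact this
    refine hmain.congr' ?_
    filter_upwards [Ioc_mem_nhdsGT_of_mem (by norm_num : (0:ℝ) ∈ Set.Ico (0:ℝ) 1)] with μ hμ
    exact (key μ hμ).symm
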